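/- Let K be an infinite field and n, d integers with d ≥ 2 and n − d ≥ d. For every f ∈ S = K[x_1,…,x_{n−1}] and every m ≥ 1, one has f · x_n^m ∈ S + I^Sp_{(n−d,d)} (sum inside R = K[x_1,…,x_n]) if and only if f ∈ I^Sp_{(n−d,d−1)}, the Specht ideal of S for the partition (n−d, d−1) of n−1. -/

import Mathlib

open MvPolynomial

/-- A Young tableau of two-row shape `(a, b)` (with `b ≤ a`) filled bijectively with
the letters of `S ⊆ Fin n`.  `top` is the first row, `bot` the second row. -/
structure TwoRowTab (n a b : ℕ) (S : Finset (Fin n)) where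
  hba : b ≤ a
  top : Fin a → Fin n
  bot : Fin b → Fin n
  inj : Function.Injective (Sum.elim top bot)
  range_eq : ∀ s : Fin n, s ∈ S ↔ ∃ x, Sum.elim top bot x = s

/-- The Specht polynomial of a two-row tableau: the product over the two-box columns
`k` of `x_{top k} - x_{bot k}`. -/
noncomputable def spechtPoly (K : Type) [Field K] {n a b : ℕ} {S : Finset (Fin n)}
    (T : TwoRowTab n a b S) : MvPolynomial (Fin n) K :=
  ∏ k : Fin b, (X (T.top (Fin.castLE T.hba k)) - X (T.bot k))

/-- The Specht ideal of the two-row shape `(a, b)` in `K[x_1, …, x_n]`. -/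
noncomputable def spechtIdeal (K : Type) [Field K] (n a b : ℕ) :
    Ideal (MvPolynomial (Fin n) K) :=
  Ideal.span (Set.range (fun T : TwoRowTab n a b Finset.univ => spechtPoly K T))

/-- A Young tableau of three-row shape `(e, e, 1)` filled bijectively with the letters
of `S ⊆ Fin n`; `low` is the unique box of the third row. -/
structure ThreeRowTab (n e : ℕ) (S : Finset (Fin n)) where
  he : 0 < e
  top : Fin e → Fin n
  mid : Fin e → Fin n
  low : Fin n
  inj : Function.Injective (Sum.elim (Sum.elim top mid) (fun _ : Unit => low))
  range_eq : ∀ s : Fin n, s ∈ S ↔ ∃ x, Sum.elim (Sum.elim top mid) (fun _ : Unit => low) x = s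

/-- The Specht polynomial of a tableau of shape `(e, e, 1)`. -/
noncomputable def spechtPoly3 (K : Type) [Field K] {n e : ℕ} {S : Finset (Fin n)}
    (T : ThreeRowTab n e S) : MvPolynomial (Fin n) K :=
  (∏ k : Fin e, (X (T.top k) - X (T.mid k))) *
    ((X (T.top ⟨0, T.he⟩) - X T.low) * (X (T.mid ⟨0, T.he⟩) - X T.low))

/-- The Specht ideal of the shape `(e, e, 1)` in `K[x_1, …, x_n]`. -/
noncomputable def spechtIdeal3 (K : Type) [Field K] (n e : ℕ) :
    Ideal (MvPolynomial (Fin n) K) :=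
  Ideal.span (Set.range (fun T : ThreeRowTab n e Finset.univ => spechtPoly3 K T))

/-- The Hilbert function of `R/I`: the `K`-dimension of the image of the space of
homogeneous polynomials of degree `j` in `R ⧸ I`. -/
noncomputable def hilb (K : Type) [Field K] {n : ℕ} (I : Ideal (MvPolynomial (Fin n) K))
    (j : ℕ) : ℕ :=
  Module.finrank K (Submodule.map (Ideal.Quotient.mkₐ K I).toLinearMap
    (homogeneousSubmodule (Fin n) K j))

/-- The strict lexicographic order on monomial exponents with `x_n ≻ x_{n-1} ≻ ⋯ ≻ x_1`:
`m₁ ≺ m₂` iff at the largest index where they differ, `m₂` has the larger exponent. -/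
def lexLt {n : ℕ} (m₁ m₂ : Fin n →₀ ℕ) : Prop :=
  Finsupp.Lex (fun i j : Fin n => j < i) (· < ·) m₁ m₂

/-- `m` is the initial (leading) monomial exponent of `f` for the lexicographic
order with `x_n ≻ ⋯ ≻ x_1`. -/
def IsInitMonomial {K : Type} [Field K] {n : ℕ} (f : MvPolynomial (Fin n) K)
    (m : Fin n →₀ ℕ) : Prop :=
  m ∈ f.support ∧ ∀ m' ∈ f.support, m' ≠ m → lexLt m' m

/-- The trimmed form of `f`: the sum of the terms of `f` whose monomial is not divisible
by any squarefree monomial of degree `d+1`, i.e. whose support has at most `d` elements. -/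
noncomputable def trm {K : Type} [Field K] {n : ℕ} (d : ℕ) (f : MvPolynomial (Fin n) K) :
    MvPolynomial (Fin n) K :=
  ∑ m ∈ f.support, if m.support.card ≤ d then monomial m (coeff m f) else 0
lemma pairs_mem_specht (K : Type) [Field K] {n a b : ℕ} (hba : b ≤ a) (hab : a + b = n)
    (p q : Fin b → Fin n) (hinj : Function.Injective (Sum.elim p q)) :
    (∏ k : Fin b, (X (p k) - X (q k)) : MvPolynomial (Fin n) K) ∈ spechtIdeal K n a b := by
  classical
  -- the set of letters used by the pairs
  set used : Finset (Fin n) := Finset.image p Finset.univ ∪ Finset.image q Finset.univ with hused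
  have hpq_ne : ∀ k l, p k ≠ q l := by
    intro k l h
    have := hinj (a₁ := Sum.inl k) (a₂ := Sum.inr l) (by simpa using h)
    simp at this
  have hp_inj : Function.Injective p := by
    intro k1 k2 h
    have := hinj (a₁ := Sum.inl k1) (a₂ := Sum.inl k2) (by simpa using h)
    simpa using this
  have hq_inj : Function.Injective q := by
    intro k1 k2 h
    have := hinj (a₁ := Sum.inr k1) (a₂ := Sum.inr k2) (by simpa using h)
    simpa using this
  have hcard_used : used.card = 2 * b := by
    rw [hused, Finset.card_union_of_disjoint]
    · rw [Finset.card_image_of_injective _ hp_inj, Finset.card_image_of_injective _ hq_inj]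
      simp; ring
    · rw [Finset.disjoint_left]
      rintro x hx hy
      obtain ⟨k, -, rfl⟩ := Finset.mem_image.1 hx
      obtain ⟨l, -, hl⟩ := Finset.mem_image.1 hy
      exact hpq_ne k l hl.symm
  have hcard : usedᶜ.card = a - b := by
    rw [Finset.card_compl, hcard_used]
    simp only [Fintype.card_fin]
    omega
  let enum : Fin (a - b) ≃o {x // x ∈ usedᶜ} := usedᶜ.orderIsoOfFin hcard
  have henum_not : ∀ i, (enum i : Fin n) ∉ used := fun i => Finset.mem_compl.1 (enum i).2
  have hp_mem : ∀ k, p k ∈ used := fun k =>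
    Finset.mem_union_left _ (Finset.mem_image.2 ⟨k, Finset.mem_univ _, rfl⟩)
  have hq_mem : ∀ k, q k ∈ used := fun k =>
    Finset.mem_union_right _ (Finset.mem_image.2 ⟨k, Finset.mem_univ _, rfl⟩)
  set top : Fin a → Fin n := fun j =>
    if h : j.val < b then p ⟨j.val, h⟩ else (enum ⟨j.val - b, by omega⟩ : Fin n) with htop
  have htop_lt : ∀ (j : Fin a) (h : j.val < b), top j = p ⟨j.val, h⟩ := by
    intro j h; simp [htop, h]
  have htop_ge : ∀ (j : Fin a) (h : ¬ j.val < b), top j = (enum ⟨j.val - b, by omega⟩ : Fin n) := by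
    intro j h; simp [htop, h]
  have hinj' : Function.Injective (Sum.elim top q) := by
    rintro (j1 | k1) (j2 | k2) h <;> simp only [Sum.elim_inl, Sum.elim_inr] at h
    · by_cases h1 : j1.val < b <;> by_cases h2 : j2.val < b
      · rw [htop_lt j1 h1, htop_lt j2 h2] at h
        have h' := hp_inj h
        exact congrArg Sum.inl (Fin.ext (by simpa using congrArg Fin.val h'))
      · rw [htop_lt j1 h1, htop_ge j2 h2] at h
        exact absurd (h ▸ hp_mem _) (henum_not _)
      · rw [htop_ge j1 h1, htop_lt j2 h2] at h
        exact absurd (h.symm ▸ hp_mem _) (henum_not _)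
      · rw [htop_ge j1 h1, htop_ge j2 h2] at h
        have h' := enum.injective (Subtype.coe_injective h)
        have h'' : j1.val - b = j2.val - b := congrArg Fin.val h'
        exact congrArg Sum.inl (Fin.ext (by omega))
    · by_cases h1 : j1.val < b
      · rw [htop_lt j1 h1] at h
        exact absurd h (hpq_ne _ _)
      · rw [htop_ge j1 h1] at h
        exact absurd (h ▸ hq_mem _) (henum_not _)
    · by_cases h2 : j2.val < b
      · rw [htop_lt j2 h2] at h
        exact absurd h.symm (hpq_ne _ _)
      · rw [htop_ge j2 h2] at h
        exact absurd (h.symm ▸ hq_mem _) (henum_not _)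
    · exact congrArg Sum.inr (hq_inj h)
  have hrange : ∀ s : Fin n, s ∈ (Finset.univ : Finset (Fin n)) ↔ ∃ x, Sum.elim top q x = s := by
    intro s
    simp only [Finset.mem_univ, true_iff]
    by_cases hs : s ∈ used
    · rcases Finset.mem_union.1 hs with h | h
      · obtain ⟨k, -, rfl⟩ := Finset.mem_image.1 h
        refine ⟨Sum.inl ⟨k.val, lt_of_lt_of_le k.isLt hba⟩, ?_⟩
        simp only [Sum.elim_inl]
        rw [htop_lt _ k.isLt]
      · obtain ⟨k, -, rfl⟩ := Finset.mem_image.1 h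
        exact ⟨Sum.inr k, rfl⟩
    · have hs' : s ∈ usedᶜ := Finset.mem_compl.2 hs
      set i := enum.symm ⟨s, hs'⟩ with hi
      have hib : b + i.val < a := by have := i.isLt; omega
      refine ⟨Sum.inl ⟨b + i.val, hib⟩, ?_⟩
      simp only [Sum.elim_inl]
      rw [htop_ge ⟨b + i.val, hib⟩ (show ¬ b + i.val < b by omega)]
      have h' : (⟨(⟨b + i.val, hib⟩ : Fin a).val - b, by omega⟩ : Fin (a - b)) = i :=
        Fin.ext (by simp)
      rw [h', hi]
      simp
  refine Ideal.subset_span ⟨⟨hba, top, q, hinj', hrange⟩, ?_⟩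
  show spechtPoly K _ = _
  unfold spechtPoly
  refine Finset.prod_congr rfl fun k _ => ?_
  have h1 : (⟨hba, top, q, hinj', hrange⟩ : TwoRowTab n a b Finset.univ).top
      (Fin.castLE hba k) = p k := by
    show top _ = _
    rw [htop_lt _ (show (Fin.castLE hba k).val < b from k.isLt)]
    exact congrArg p (Fin.ext rfl)
  rw [h1]

set_option maxHeartbeats 1000000 in
lemma specht_subset (K : Type) [Field K] (n a c : ℕ) (h1 : c + 2 ≤ a) (hab : a + (c + 2) = n) :
    spechtIdeal K n a (c + 2) ≤
      Ideal.map (rename (Fin.castLE (n.sub_le 1)))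
        (spechtIdeal K (n - 1) a (c + 1)) := by
  classical
  rw [spechtIdeal, Ideal.span_le]
  rintro _ ⟨T, rfl⟩
  set lastn : Fin n := ⟨n - 1, by omega⟩ with hlastn
  set F : Fin (c + 2) → MvPolynomial (Fin n) K :=
    fun k => X (T.top (Fin.castLE T.hba k)) - X (T.bot k) with hF
  have hbad_unique : ∀ k1 k2 : Fin (c + 2),
      (T.top (Fin.castLE T.hba k1) = lastn ∨ T.bot k1 = lastn) →
      (T.top (Fin.castLE T.hba k2) = lastn ∨ T.bot k2 = lastn) → k1 = k2 := by
    intro k1 k2 hk1 hk2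
    rcases hk1 with h1' | h1' <;> rcases hk2 with h2' | h2'
    · have := T.inj (a₁ := Sum.inl (Fin.castLE T.hba k1)) (a₂ := Sum.inl (Fin.castLE T.hba k2))
        (by simpa using h1'.trans h2'.symm)
      simp only [Sum.inl.injEq] at this
      have hv0 := congrArg Fin.val this
      have hv : k1.val = k2.val := hv0
      exact Fin.ext hv
    · have := T.inj (a₁ := Sum.inl (Fin.castLE T.hba k1)) (a₂ := Sum.inr k2)
        (by simpa using h1'.trans h2'.symm)
      simp at this
    · have := T.inj (a₁ := Sum.inr k1) (a₂ := Sum.inl (Fin.castLE T.hba k2))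
        (by simpa using h1'.trans h2'.symm)
      simp at this
    · have := T.inj (a₁ := Sum.inr k1) (a₂ := Sum.inr k2)
        (by simpa using h1'.trans h2'.symm)
      simpa using this
  set k0 : Fin (c + 2) :=
    if h : ∃ k : Fin (c + 2), T.top (Fin.castLE T.hba k) = lastn ∨ T.bot k = lastn
    then h.choose else ⟨0, by omega⟩ with hk0def
  have hk0 : ∀ k : Fin (c + 2), k ≠ k0 →
      T.top (Fin.castLE T.hba k) ≠ lastn ∧ T.bot k ≠ lastn := by
    intro k hk
    constructor
    · intro hc
      by_cases h : ∃ k : Fin (c + 2), T.top (Fin.castLE T.hba k) = lastn ∨ T.bot k = lastn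
      · have : k = k0 := by
          rw [hk0def, dif_pos h]
          exact hbad_unique _ _ (Or.inl hc) h.choose_spec
        exact hk this
      · exact h ⟨k, Or.inl hc⟩
    · intro hc
      by_cases h : ∃ k : Fin (c + 2), T.top (Fin.castLE T.hba k) = lastn ∨ T.bot k = lastn
      · have : k = k0 := by
          rw [hk0def, dif_pos h]
          exact hbad_unique _ _ (Or.inr hc) h.choose_spec
        exact hk this
      · exact h ⟨k, Or.inr hc⟩
  -- the reduced pairs avoiding the last variable
  have hne : ∀ i : Fin (c + 1), k0.succAbove i ≠ k0 := fun i => Fin.succAbove_ne k0 i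
  set p' : Fin (c + 1) → Fin (n - 1) := fun i =>
    ⟨(T.top (Fin.castLE T.hba (k0.succAbove i))).val, by
      have h := (hk0 _ (hne i)).1
      have h2 : (T.top (Fin.castLE T.hba (k0.succAbove i))).val ≠ n - 1 :=
        fun hv => h (Fin.ext hv)
      have := (T.top (Fin.castLE T.hba (k0.succAbove i))).isLt
      omega⟩ with hp'
  set q' : Fin (c + 1) → Fin (n - 1) := fun i =>
    ⟨(T.bot (k0.succAbove i)).val, by
      have h := (hk0 _ (hne i)).2
      have h2 : (T.bot (k0.succAbove i)).val ≠ n - 1 := fun hv => h (Fin.ext hv)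
      have := (T.bot (k0.succAbove i)).isLt
      omega⟩ with hq'
  have hinj' : Function.Injective (Sum.elim p' q') := by
    rintro (i1 | i1) (i2 | i2) h <;> simp only [Sum.elim_inl, Sum.elim_inr, hp', hq'] at h
    · have hv00 := congrArg Fin.val h
      have hv : (T.top (Fin.castLE T.hba (k0.succAbove i1))).val
          = (T.top (Fin.castLE T.hba (k0.succAbove i2))).val := hv00
      have := T.inj (a₁ := Sum.inl (Fin.castLE T.hba (k0.succAbove i1)))
        (a₂ := Sum.inl (Fin.castLE T.hba (k0.succAbove i2))) (by simpa using Fin.ext hv)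
      simp only [Sum.inl.injEq] at this
      have hv20 := congrArg Fin.val this
      have hv2 : (k0.succAbove i1).val = (k0.succAbove i2).val := hv20
      exact congrArg Sum.inl (Fin.succAbove_right_injective (Fin.ext hv2))
    · have hv00 := congrArg Fin.val h
      have hv : (T.top (Fin.castLE T.hba (k0.succAbove i1))).val
          = (T.bot (k0.succAbove i2)).val := hv00
      have := T.inj (a₁ := Sum.inl (Fin.castLE T.hba (k0.succAbove i1)))
        (a₂ := Sum.inr (k0.succAbove i2)) (by simpa using Fin.ext hv)
      simp at this
    · have hv00 := congrArg Fin.val h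
      have hv : (T.bot (k0.succAbove i1)).val
          = (T.top (Fin.castLE T.hba (k0.succAbove i2))).val := hv00
      have := T.inj (a₁ := Sum.inr (k0.succAbove i1))
        (a₂ := Sum.inl (Fin.castLE T.hba (k0.succAbove i2))) (by simpa using Fin.ext hv)
      simp at this
    · have hv00 := congrArg Fin.val h
      have hv : (T.bot (k0.succAbove i1)).val = (T.bot (k0.succAbove i2)).val := hv00
      have := T.inj (a₁ := Sum.inr (k0.succAbove i1))
        (a₂ := Sum.inr (k0.succAbove i2)) (by simpa using Fin.ext hv)
      simp only [Sum.inr.injEq] at this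
      exact congrArg Sum.inr (Fin.succAbove_right_injective this)
  have hmem : (∏ i : Fin (c + 1), (X (p' i) - X (q' i)) : MvPolynomial (Fin (n - 1)) K)
      ∈ spechtIdeal K (n - 1) a (c + 1) :=
    pairs_mem_specht K (by omega) (by omega) p' q' hinj'
  have hsplit : spechtPoly K T = F k0 * ∏ i : Fin (c + 1), F (k0.succAbove i) :=
    Fin.prod_univ_succAbove F k0
  have hren : (rename (Fin.castLE (n.sub_le 1))
        (∏ i : Fin (c + 1), (X (p' i) - X (q' i)) : MvPolynomial (Fin (n - 1)) K))
      = ∏ i : Fin (c + 1), F (k0.succAbove i) := by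
    rw [map_prod]
    refine Finset.prod_congr rfl fun i _ => ?_
    rw [map_sub, rename_X, rename_X]
    congr 1 <;> exact congrArg X (Fin.ext rfl)
  show spechtPoly K T ∈ _
  rw [hsplit, ← hren]
  exact Ideal.mul_mem_left _ _ (Ideal.mem_map_of_mem _ hmem)

noncomputable def toPolyHom (K : Type) [Field K] (n : ℕ) :
    MvPolynomial (Fin n) K →ₐ[K] Polynomial (MvPolynomial (Fin (n - 1)) K) :=
  aeval (fun i : Fin n =>
    if h : i.val < n - 1 then Polynomial.C (X ⟨i.val, h⟩) else Polynomial.X)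

lemma toPolyHom_rename (K : Type) [Field K] (n : ℕ) (f : MvPolynomial (Fin (n - 1)) K) :
    toPolyHom K n (rename (Fin.castLE (n.sub_le 1)) f) = Polynomial.C f := by
  induction f using MvPolynomial.induction_on with
  | C a =>
      rw [rename_C]
      simp [toPolyHom, algebraMap_eq, Polynomial.algebraMap_eq]
  | add f g hf hg => rw [map_add, map_add, hf, hg, map_add]
  | mul_X f i hf =>
      rw [map_mul, rename_X, map_mul, hf, map_mul]
      congr 1
      have hlt : (Fin.castLE (n.sub_le 1) i).val < n - 1 := i.isLt
      simp only [toPolyHom, aeval_X, dif_pos hlt]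
      rfl

lemma toPolyHom_lastX (K : Type) [Field K] (n : ℕ) (hn : 0 < n) :
    toPolyHom K n (X (⟨n - 1, by omega⟩ : Fin n)) = Polynomial.X := by
  simp only [toPolyHom, aeval_X]
  rw [dif_neg (by simp)]

/-- The set of polynomials `f` of `S` with `f·x_n^m ∈ S + I` is an ideal of `S`. -/
noncomputable def Jset (K : Type) [Field K] (n a b m : ℕ) (hn : 0 < n) :
    Ideal (MvPolynomial (Fin (n - 1)) K) where
  carrier := {f | ∃ s g, g ∈ spechtIdeal K n a b ∧
      rename (Fin.castLE (n.sub_le 1)) f * X (⟨n - 1, by omega⟩ : Fin n) ^ m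
        = rename (Fin.castLE (n.sub_le 1)) s + g}
  zero_mem' := ⟨0, 0, Ideal.zero_mem _, by simp⟩
  add_mem' := by
    rintro f1 f2 ⟨s1, g1, hg1, e1⟩ ⟨s2, g2, hg2, e2⟩
    refine ⟨s1 + s2, g1 + g2, Ideal.add_mem _ hg1 hg2, ?_⟩
    rw [map_add, add_mul, e1, e2, map_add]
    ring
  smul_mem' := by
    rintro t f ⟨s, g, hg, e⟩
    refine ⟨t * s, rename (Fin.castLE (n.sub_le 1)) t * g,
      Ideal.mul_mem_left _ _ hg, ?_⟩
    rw [smul_eq_mul, map_mul, mul_assoc, e, map_mul, mul_add]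

lemma back_ind (K : Type) [Field K] (n a c : ℕ) (h1 : c + 2 ≤ a) (hab : a + (c + 2) = n) :
    ∀ m : ℕ, spechtIdeal K (n - 1) a (c + 1) ≤ Jset K n a (c + 2) m (by omega) := by
  classical
  have hn : 0 < n := by omega
  intro m
  induction m with
  | zero =>
      intro f hf
      exact ⟨f, 0, Ideal.zero_mem _, by simp⟩
  | succ m ih =>
      rw [spechtIdeal, Ideal.span_le]
      rintro _ ⟨T, rfl⟩
      -- find a fresh letter j0 of S not used in the columns of T
      set U : Finset (Fin (n - 1)) :=
        Finset.image (fun k => T.top (Fin.castLE T.hba k)) Finset.univ ∪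
          Finset.image T.bot Finset.univ with hU
      have hUcard : U.card ≤ (c + 1) + (c + 1) := le_trans (Finset.card_union_le _ _)
        (add_le_add (le_trans (Finset.card_image_le) (by simp))
          (le_trans (Finset.card_image_le) (by simp)))
      have hUne : Uᶜ.Nonempty := by
        rw [← Finset.card_pos, Finset.card_compl]
        simp only [Fintype.card_fin]
        omega
      obtain ⟨j0, hj0⟩ := hUne
      have hj0' : j0 ∉ U := Finset.mem_compl.1 hj0
      have htopU : ∀ k : Fin (c + 1), T.top (Fin.castLE T.hba k) ∈ U := fun k =>
        Finset.mem_union_left _ (Finset.mem_image.2 ⟨k, Finset.mem_univ _, rfl⟩)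
      have hbotU : ∀ k : Fin (c + 1), T.bot k ∈ U := fun k =>
        Finset.mem_union_right _ (Finset.mem_image.2 ⟨k, Finset.mem_univ _, rfl⟩)
      set castle := Fin.castLE (n.sub_le 1) with hcastle
      have hcinj : Function.Injective castle := Fin.castLE_injective _
      set lastn : Fin n := ⟨n - 1, by omega⟩ with hlastn
      have hlastne : ∀ x : Fin (n - 1), castle x ≠ lastn := by
        intro x h
        have h2 := congrArg Fin.val h
        have h3 : x.val = n - 1 := h2
        have := x.isLt
        omega
      -- the two rows of the extended tableau, as pair functions
      set p : Fin (c + 2) → Fin n := fun k =>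
        if h : k.val < c + 1 then castle (T.top (Fin.castLE T.hba ⟨k.val, h⟩)) else castle j0
        with hp
      set q : Fin (c + 2) → Fin n := fun k =>
        if h : k.val < c + 1 then castle (T.bot ⟨k.val, h⟩) else lastn with hq
      have hinj : Function.Injective (Sum.elim p q) := by
        rintro (k1 | k1) (k2 | k2) h <;>
          simp only [Sum.elim_inl, Sum.elim_inr, hp, hq] at h <;>
          [skip; skip; skip; skip] <;> skip
        · by_cases e1 : k1.val < c + 1 <;> by_cases e2 : k2.val < c + 1 <;>
            simp only [dif_pos, dif_neg, e1, e2, dite_true, dite_false] at h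
          · have h2 := hcinj h
            have h3 := T.inj (a₁ := Sum.inl (Fin.castLE T.hba ⟨k1.val, e1⟩))
              (a₂ := Sum.inl (Fin.castLE T.hba ⟨k2.val, e2⟩)) (by simpa using h2)
            simp only [Sum.inl.injEq] at h3
            have h40 := congrArg Fin.val h3
            have h4 : k1.val = k2.val := h40
            exact congrArg Sum.inl (Fin.ext h4)
          · exact absurd ((hcinj h) ▸ htopU ⟨k1.val, e1⟩) hj0'
          · exact absurd ((hcinj h).symm ▸ htopU ⟨k2.val, e2⟩) hj0'
          · exact congrArg Sum.inl (Fin.ext (by omega))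
        · by_cases e1 : k1.val < c + 1 <;> by_cases e2 : k2.val < c + 1 <;>
            simp only [dif_pos, dif_neg, e1, e2, dite_true, dite_false] at h
          · have h2 := hcinj h
            have h3 := T.inj (a₁ := Sum.inl (Fin.castLE T.hba ⟨k1.val, e1⟩))
              (a₂ := Sum.inr ⟨k2.val, e2⟩) (by simpa using h2)
            simp at h3
          · exact absurd h (hlastne _)
          · exact absurd ((hcinj h).symm ▸ hbotU ⟨k2.val, e2⟩) hj0'
          · exact absurd h (hlastne _)
        · by_cases e1 : k1.val < c + 1 <;> by_cases e2 : k2.val < c + 1 <;>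
            simp only [dif_pos, dif_neg, e1, e2, dite_true, dite_false] at h
          · have h2 := hcinj h
            have h3 := T.inj (a₁ := Sum.inr ⟨k1.val, e1⟩)
              (a₂ := Sum.inl (Fin.castLE T.hba ⟨k2.val, e2⟩)) (by simpa using h2)
            simp at h3
          · exact absurd ((hcinj h) ▸ hbotU ⟨k1.val, e1⟩) hj0'
          · exact absurd h.symm (hlastne _)
          · exact absurd h.symm (hlastne _)
        · by_cases e1 : k1.val < c + 1 <;> by_cases e2 : k2.val < c + 1 <;>
            simp only [dif_pos, dif_neg, e1, e2, dite_true, dite_false] at h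
          · have h2 := hcinj h
            have h3 := T.inj (a₁ := Sum.inr ⟨k1.val, e1⟩)
              (a₂ := Sum.inr ⟨k2.val, e2⟩) (by simpa using h2)
            simp only [Sum.inr.injEq] at h3
            have h40 := congrArg Fin.val h3
            have h4 : k1.val = k2.val := h40
            exact congrArg Sum.inr (Fin.ext h4)
          · exact absurd h (hlastne _)
          · exact absurd h.symm (hlastne _)
          · exact congrArg Sum.inr (Fin.ext (by omega))
      have hmem : (∏ k : Fin (c + 2), (X (p k) - X (q k)) : MvPolynomial (Fin n) K)
          ∈ spechtIdeal K n a (c + 2) :=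
        pairs_mem_specht K h1 hab p q hinj
      have hprod : (∏ k : Fin (c + 2), (X (p k) - X (q k)) : MvPolynomial (Fin n) K)
          = rename castle (spechtPoly K T) * (X (castle j0) - X lastn) := by
        rw [Fin.prod_univ_castSucc (f := fun k : Fin (c + 2) => (X (p k) - X (q k) :
          MvPolynomial (Fin n) K))]
        congr 1
        · rw [spechtPoly, map_prod]
          refine Finset.prod_congr rfl fun i _ => ?_
          rw [map_sub, rename_X, rename_X]
          have hpi : p (Fin.castSucc i) = castle (T.top (Fin.castLE T.hba i)) := by
            rw [hp]
            simp only
            rw [dif_pos (show (Fin.castSucc i).val < c + 1 from i.isLt)]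
            congr 2
          have hqi : q (Fin.castSucc i) = castle (T.bot i) := by
            rw [hq]
            simp only
            rw [dif_pos (show (Fin.castSucc i).val < c + 1 from i.isLt)]
            congr 2
          rw [hpi, hqi]
        · have hpl : p (Fin.last (c + 1)) = castle j0 := by
            rw [hp]; simp only
            rw [dif_neg (by simp)]
          have hql : q (Fin.last (c + 1)) = lastn := by
            rw [hq]; simp only
            rw [dif_neg (by simp)]
          rw [hpl, hql]
      -- the element of the bigger Specht ideal
      have hElt : rename castle (spechtPoly K T) * (X (castle j0) - X lastn)
          ∈ spechtIdeal K n a (c + 2) := hprod ▸ hmem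
      -- apply the inductive hypothesis to f_T * x_{j0}
      have hIH : spechtPoly K T * X j0 ∈ spechtIdeal K (n - 1) a (c + 1) :=
        Ideal.mul_mem_right _ _ (Ideal.subset_span ⟨T, rfl⟩)
      obtain ⟨s, g, hg, e⟩ := ih hIH
      refine ⟨s, g - (rename castle (spechtPoly K T) * (X (castle j0) - X lastn))
        * X lastn ^ m, Ideal.sub_mem _ hg (Ideal.mul_mem_right _ _ hElt), ?_⟩
      have key : rename castle (spechtPoly K T) * X lastn ^ (m + 1)
          = rename castle (spechtPoly K T * X j0) * X lastn ^ m
            - (rename castle (spechtPoly K T) * (X (castle j0) - X lastn)) * X lastn ^ m := by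
        rw [map_mul, rename_X]
        ring
      show rename (Fin.castLE (n.sub_le 1)) (spechtPoly K T) * X (⟨n - 1, by omega⟩ : Fin n) ^ (m + 1) = _
      rw [← hcastle, ← hlastn, key, e]
      ring

/-- over an infinite field, for `d ≥ 2`, `n - d ≥ d`, `f ∈ S` and `m ≥ 1`:
`f ⬝ x_n^m ∈ S + I^Sp_{(n-d,d)}` (sum inside `R = K[x_1, …, x_n]`) iff
`f ∈ I^Sp_{(n-d,d-1)}`, the Specht ideal of `S = K[x_1, …, x_{n-1}]`. -/
theorem mul_xn_pow_mem_iff (K : Type) [Field K] [Infinite K] (n d : ℕ)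
    (h1 : 2 ≤ d) (h2 : d ≤ n - d) (f : MvPolynomial (Fin (n - 1)) K) (m : ℕ)
    (hm : 1 ≤ m) :
    (∃ (s : MvPolynomial (Fin (n - 1)) K) (g : MvPolynomial (Fin n) K),
        g ∈ spechtIdeal K n (n - d) d ∧
          MvPolynomial.rename (Fin.castLE (n.sub_le 1)) f
              * X (⟨n - 1, by omega⟩ : Fin n) ^ m
            = MvPolynomial.rename (Fin.castLE (n.sub_le 1)) s + g)
      ↔ f ∈ spechtIdeal K (n - 1) (n - d) (d - 1) := by
  obtain ⟨c, rfl⟩ : ∃ c, d = c + 2 := ⟨d - 2, by omega⟩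
  have hn : 0 < n := by omega
  have hsub : c + 2 ≤ n - (c + 2) := h2
  have hab : (n - (c + 2)) + (c + 2) = n := by omega
  constructor
  · rintro ⟨s, g, hg, he⟩
    set I' := spechtIdeal K (n - 1) (n - (c + 2)) (c + 1) with hI'
    have hgmem : g ∈ Ideal.map (rename (Fin.castLE (n.sub_le 1))) I' :=
      specht_subset K n (n - (c + 2)) c hsub hab hg
    set ρ := (Polynomial.mapRingHom (Ideal.Quotient.mk I')).comp
      (toPolyHom K n).toRingHom with hρ
    have hρren : ∀ t : MvPolynomial (Fin (n - 1)) K,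
        ρ (rename (Fin.castLE (n.sub_le 1)) t) = Polynomial.C (Ideal.Quotient.mk I' t) := by
      intro t
      rw [hρ, RingHom.comp_apply]
      have h0 : (toPolyHom K n).toRingHom (rename (Fin.castLE (n.sub_le 1)) t)
          = Polynomial.C t := toPolyHom_rename K n t
      rw [h0]
      exact Polynomial.map_C _
    have hρX : ρ (X (⟨n - 1, by omega⟩ : Fin n)) = Polynomial.X := by
      rw [hρ, RingHom.comp_apply]
      have h0 : (toPolyHom K n).toRingHom (X (⟨n - 1, by omega⟩ : Fin n))
          = Polynomial.X := toPolyHom_lastX K n hn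
      rw [h0]
      exact Polynomial.map_X (f := Ideal.Quotient.mk I')
    have hker : ρ g = 0 := by
      have hle : Ideal.map (rename (Fin.castLE (n.sub_le 1))) I' ≤ RingHom.ker ρ := by
        rw [Ideal.map_le_iff_le_comap]
        intro h hh
        rw [Ideal.mem_comap, RingHom.mem_ker, hρren]
        rw [show Ideal.Quotient.mk I' h = 0 from (Ideal.Quotient.eq_zero_iff_mem).2 hh]
        exact Polynomial.C_0
      exact RingHom.mem_ker.1 (hle hgmem)
    have he2 := congrArg ρ he
    rw [map_mul, map_pow, hρren, hρX, map_add, hρren, hker, add_zero] at he2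
    have hc := congrArg (fun p => Polynomial.coeff p m) he2
    simp only [Polynomial.coeff_C_mul, Polynomial.coeff_X_pow, eq_self_iff_true, if_true,
      mul_one, Polynomial.coeff_C, if_neg (by omega : ¬ m = 0)] at hc
    exact (Ideal.Quotient.eq_zero_iff_mem).1 hc
  · intro hf
    obtain ⟨s, g, hg, e⟩ := back_ind K n (n - (c + 2)) c hsub hab m hf
    exact ⟨s, g, hg, e⟩
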